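/- Fix w ≥ 0 and λ ∈ [0,1], with λ ∉ {0,1} if w = 0. Define f : (0,∞)² → ℝ² by f(c,z) := ( (λ²c + (w + λ(1−λ)c)z)/2 , ((1−λ)²c + (w + λ(1−λ)c)/z)/2 ), and let 𝓗 := {(b₁,b₂) ∈ (0,∞)² : 4b₁b₂ > w²} (the set of (b₁,b₂) for which the matrix [[2b₁,−w],[−w,2b₂]] is positive definite). Then f is a bijection from (0,∞)² onto 𝓗, and its inverse maps (b₁,b₂) to (c,z) where c = (4b₁b₂ − w²)/(2wλ(1−λ) + 2b₂λ² + 2b₁(1−λ)²) and z = (2b₁ − λ²c)/(w + λ(1−λ)c). -/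

import Mathlib

lemma stmt4_aux1 (b1 b2 lam : ℝ) (h1 : 0 < b1) (h2 : 0 < b2) :
    0 < b2 * lam ^ 2 + b1 * (1 - lam) ^ 2 := by
  rcases eq_or_ne lam 0 with h | h
  · subst h; nlinarith
  · have hl : 0 < lam ^ 2 := by positivity
    nlinarith [mul_nonneg h1.le (sq_nonneg (1 - lam)), mul_pos h2 hl]

/-- the change of variables `f(c,z)` is a bijection from
`(0,∞)²` onto `𝓗 = {(b₁,b₂) ∈ (0,∞)² : 4b₁b₂ > w²}`, with the stated inverse. -/
theorem stmt4 (w lam : ℝ) (hw : 0 ≤ w) (hlam : lam ∈ Set.Icc (0 : ℝ) 1)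
    (hw0 : w = 0 → lam ≠ 0 ∧ lam ≠ 1) :
    (let f : ℝ × ℝ → ℝ × ℝ := fun p =>
       ((lam ^ 2 * p.1 + (w + lam * (1 - lam) * p.1) * p.2) / 2,
        ((1 - lam) ^ 2 * p.1 + (w + lam * (1 - lam) * p.1) / p.2) / 2)
     let g : ℝ × ℝ → ℝ × ℝ := fun q =>
       ((4 * q.1 * q.2 - w ^ 2) /
          (2 * w * lam * (1 - lam) + 2 * q.2 * lam ^ 2 + 2 * q.1 * (1 - lam) ^ 2),
        (2 * q.1 - lam ^ 2 * ((4 * q.1 * q.2 - w ^ 2) /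
          (2 * w * lam * (1 - lam) + 2 * q.2 * lam ^ 2 + 2 * q.1 * (1 - lam) ^ 2))) /
          (w + lam * (1 - lam) * ((4 * q.1 * q.2 - w ^ 2) /
          (2 * w * lam * (1 - lam) + 2 * q.2 * lam ^ 2 + 2 * q.1 * (1 - lam) ^ 2))))
     let 𝓗 : Set (ℝ × ℝ) := {q | 0 < q.1 ∧ 0 < q.2 ∧ 4 * q.1 * q.2 > w ^ 2}
     Set.BijOn f (Set.Ioi 0 ×ˢ Set.Ioi 0) 𝓗 ∧
       Set.InvOn g f (Set.Ioi 0 ×ˢ Set.Ioi 0) 𝓗) := by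
  intro f g 𝓗
  obtain ⟨hl0, hl1⟩ := hlam
  have hlm : 0 ≤ 1 - lam := by linarith
  -- A(c) := w + lam (1-lam) c is positive for c > 0
  have hApos : ∀ c : ℝ, 0 < c → 0 < w + lam * (1 - lam) * c := by
    intro c hc
    rcases hw.eq_or_lt with h | h
    · obtain ⟨ha, hb⟩ := hw0 h.symm
      have h1 : 0 < lam := lt_of_le_of_ne hl0 (Ne.symm ha)
      have h2 : lam < 1 := lt_of_le_of_ne hl1 hb
      nlinarith [mul_pos (mul_pos h1 (by linarith : (0:ℝ) < 1 - lam)) hc]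
    · nlinarith [mul_nonneg (mul_nonneg hl0 hlm) hc.le]
  have hsum : ∀ z : ℝ, 0 < z → 0 < lam + (1 - lam) * z := by
    intro z hz
    rcases hl0.eq_or_lt with h | h
    · rw [← h]; simpa using hz
    · nlinarith [mul_nonneg hlm hz.le]
  -- MapsTo f
  have hmf : Set.MapsTo f (Set.Ioi 0 ×ˢ Set.Ioi 0) 𝓗 := by
    rintro ⟨c, z⟩ ⟨hc, hz⟩
    simp only [Set.mem_Ioi] at hc hz
    have hA := hApos c hc
    have hs := hsum z hz
    have hAz : 0 < (w + lam * (1 - lam) * c) / z := div_pos hA hz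
    refine ⟨?_, ?_, ?_⟩
    · show 0 < (lam ^ 2 * c + (w + lam * (1 - lam) * c) * z) / 2
      nlinarith [mul_pos hA hz, mul_nonneg (sq_nonneg lam) hc.le]
    · show 0 < ((1 - lam) ^ 2 * c + (w + lam * (1 - lam) * c) / z) / 2
      nlinarith [mul_nonneg (sq_nonneg (1 - lam)) hc.le]
    · show w ^ 2 < 4 * ((lam ^ 2 * c + (w + lam * (1 - lam) * c) * z) / 2) *
        (((1 - lam) ^ 2 * c + (w + lam * (1 - lam) * c) / z) / 2)
      have key : 4 * ((lam ^ 2 * c + (w + lam * (1 - lam) * c) * z) / 2) *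
          (((1 - lam) ^ 2 * c + (w + lam * (1 - lam) * c) / z) / 2) - w ^ 2 =
          c * (w + lam * (1 - lam) * c) * (lam + (1 - lam) * z) ^ 2 / z := by
        field_simp
        ring
      have hpos : 0 < c * (w + lam * (1 - lam) * c) * (lam + (1 - lam) * z) ^ 2 / z :=
        div_pos (mul_pos (mul_pos hc hA) (pow_pos hs 2)) hz
      linarith
  -- denominator positive on 𝓗
  have hDpos : ∀ q : ℝ × ℝ, q ∈ 𝓗 →
      0 < 2 * w * lam * (1 - lam) + 2 * q.2 * lam ^ 2 + 2 * q.1 * (1 - lam) ^ 2 := by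
    rintro ⟨b1, b2⟩ ⟨hb1, hb2, hb⟩
    have h1 := stmt4_aux1 b1 b2 lam hb1 hb2
    nlinarith [mul_nonneg (mul_nonneg hw hl0) hlm]
  -- numerator 2 b1 - lam^2 c positive on 𝓗
  have hnum : ∀ q : ℝ × ℝ, q ∈ 𝓗 →
      0 < 2 * q.1 - lam ^ 2 * ((4 * q.1 * q.2 - w ^ 2) /
        (2 * w * lam * (1 - lam) + 2 * q.2 * lam ^ 2 + 2 * q.1 * (1 - lam) ^ 2)) := by
    rintro ⟨b1, b2⟩ hq
    obtain ⟨hb1, hb2, hb⟩ := hq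
    have hD := hDpos (b1, b2) ⟨hb1, hb2, hb⟩
    have h2 : 0 < 2 * b1 * (1 - lam) + lam * w := by
      rcases eq_or_lt_of_le hl1 with h | h
      · rcases hw.eq_or_lt with h0 | h0
        · exact absurd h (hw0 h0.symm).2
        · nlinarith
      · nlinarith [mul_nonneg hl0 hw]
    have key : 2 * b1 - lam ^ 2 * ((4 * b1 * b2 - w ^ 2) /
        (2 * w * lam * (1 - lam) + 2 * b2 * lam ^ 2 + 2 * b1 * (1 - lam) ^ 2)) =
        (2 * b1 * (1 - lam) + lam * w) ^ 2 /
        (2 * w * lam * (1 - lam) + 2 * b2 * lam ^ 2 + 2 * b1 * (1 - lam) ^ 2) := by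
      have hD' : (2 * w * lam * (1 - lam) + 2 * b2 * lam ^ 2 + 2 * b1 * (1 - lam) ^ 2) ≠ 0 :=
        ne_of_gt hD
      rw [eq_div_iff hD', sub_mul, mul_assoc (lam ^ 2), div_mul_cancel₀ _ hD']
      ring
    rw [key]
    exact div_pos (pow_pos h2 2) hD
  -- c positive on 𝓗
  have hcpos : ∀ q : ℝ × ℝ, q ∈ 𝓗 →
      0 < (4 * q.1 * q.2 - w ^ 2) /
        (2 * w * lam * (1 - lam) + 2 * q.2 * lam ^ 2 + 2 * q.1 * (1 - lam) ^ 2) := by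
    rintro q hq
    exact div_pos (by obtain ⟨_, _, hb⟩ := hq; linarith) (hDpos q hq)
  -- MapsTo g
  have hmg : Set.MapsTo g 𝓗 (Set.Ioi 0 ×ˢ Set.Ioi 0) := by
    rintro q hq
    exact ⟨hcpos q hq, div_pos (hnum q hq) (hApos _ (hcpos q hq))⟩
  -- left inverse
  have hleft : Set.LeftInvOn g f (Set.Ioi 0 ×ˢ Set.Ioi 0) := by
    rintro ⟨c, z⟩ ⟨hc, hz⟩
    simp only [Set.mem_Ioi] at hc hz
    have hA := hApos c hc
    have hs := hsum z hz
    have hm := hmf (Set.mk_mem_prod hc hz)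
    have hD := hDpos _ hm
    simp only [f, g] at hD ⊢
    have e1 : (4 * ((lam ^ 2 * c + (w + lam * (1 - lam) * c) * z) / 2) *
          (((1 - lam) ^ 2 * c + (w + lam * (1 - lam) * c) / z) / 2) - w ^ 2) /
        (2 * w * lam * (1 - lam) +
          2 * (((1 - lam) ^ 2 * c + (w + lam * (1 - lam) * c) / z) / 2) * lam ^ 2 +
          2 * ((lam ^ 2 * c + (w + lam * (1 - lam) * c) * z) / 2) * (1 - lam) ^ 2) = c := by
      rw [div_eq_iff (ne_of_gt hD)]
      field_simp
      ring
    rw [Prod.mk.injEq]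
    refine ⟨e1, ?_⟩
    rw [e1, div_eq_iff (ne_of_gt hA)]
    ring
  -- right inverse
  have hright : Set.RightInvOn g f 𝓗 := by
    rintro ⟨b1, b2⟩ hq
    obtain ⟨hb1, hb2, hb⟩ := hq
    have hD := hDpos (b1, b2) ⟨hb1, hb2, hb⟩
    have hC := hcpos (b1, b2) ⟨hb1, hb2, hb⟩
    have hN := hnum (b1, b2) ⟨hb1, hb2, hb⟩
    simp only [f, g] at hC hN ⊢
    set C : ℝ := (4 * b1 * b2 - w ^ 2) /
      (2 * w * lam * (1 - lam) + 2 * b2 * lam ^ 2 + 2 * b1 * (1 - lam) ^ 2) with hCdef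
    have hA := hApos C hC
    have hCD : C * (2 * w * lam * (1 - lam) + 2 * b2 * lam ^ 2 + 2 * b1 * (1 - lam) ^ 2) =
        4 * b1 * b2 - w ^ 2 := by
      rw [hCdef, div_mul_cancel₀ _ (ne_of_gt hD)]
    rw [Prod.mk.injEq]
    constructor
    · have hA' : w + lam * C * (1 - lam) ≠ 0 :=
        ne_of_gt (by linarith [mul_right_comm lam C (1 - lam)])
      field_simp
      ring
    · field_simp
      linear_combination hCD
  exact ⟨Set.InvOn.bijOn ⟨hleft, hright⟩ hmf hmg, ⟨hleft, hright⟩⟩
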